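/- Let T be a marked genus-labeled tree which is stable, with total number of marked points n ≥ 1, and suppose there is a distinguished vertex v₀ with gv(v₀) = g > 0 while gv(v) = 0 for every other vertex v ≠ v₀ (so the total genus is g). Then the number of vertices v with gv(v) = 0 is at most n − 1. -/

import Mathlib

/-- A stable marked genus-labeled tree with `n ≥ 1` marked points, in which a single
distinguished vertex carries all the (positive) genus `g` and all other vertices have
genus `0` (the dual graph of a curve with rational tails), has at most `n - 1`
vertices of genus `0`. -/
theorem rational_tails_genus_zero_bound (V : Type*) [Fintype V] [Nonempty V] [DecidableEq V]
    (G : SimpleGraph V) [DecidableRel G.Adj] (hT : G.IsTree)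
    (gv m : V → ℕ) (g n : ℕ)
    (hn : n = ∑ v, m v) (hn1 : 1 ≤ n)
    (hstable : ∀ v, 2 * (gv v : ℤ) - 2 + G.degree v + m v > 0)
    (v₀ : V) (hv₀ : gv v₀ = g) (hgpos : 0 < g)
    (hrest : ∀ v, v ≠ v₀ → gv v = 0) :
    ((Finset.univ.filter (fun v => gv v = 0)).card : ℤ) ≤ (n : ℤ) - 1 := by
  classical
  have hfilter : Finset.univ.filter (fun v => gv v = 0) = Finset.univ.erase v₀ := by
    ext v
    simp only [Finset.mem_filter, Finset.mem_univ, true_and, Finset.mem_erase, and_true]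
    constructor
    · intro h hv
      subst hv
      omega
    · intro h
      exact hrest v h
  rw [hfilter, Finset.card_erase_of_mem (Finset.mem_univ _)]
  set N := Fintype.card V with hN
  have hNpos : 0 < N := Fintype.card_pos
  rcases eq_or_lt_of_le (Nat.one_le_iff_ne_zero.mpr hNpos.ne') with h1 | hN2
  · -- N = 1
    rw [Finset.card_univ, ← hN, ← h1]
    simp
    omega
  · -- N ≥ 2
    have hcard : Finset.univ.card = N := Finset.card_univ
    rw [hcard]
    -- degree sum
    have hdegsum : ∑ v, G.degree v = 2 * (N - 1) := by
      have h1 := hT.card_edgeFinset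
      rw [G.sum_degrees_eq_twice_card_edges]
      omega
    -- v₀ has positive degree
    have hdeg₀ : 1 ≤ G.degree v₀ := by
      rw [Nat.one_le_iff_ne_zero, ← Nat.pos_iff_ne_zero, G.degree_pos_iff_exists_adj]
      obtain ⟨u, hu⟩ := Fintype.exists_ne_of_one_lt_card hN2 v₀
      obtain ⟨w⟩ := hT.isConnected.preconnected v₀ u
      cases w with
      | nil => exact absurd rfl hu
      | cons h p => exact ⟨_, h⟩
    -- stability on genus-0 vertices
    have hst : ∀ v ∈ Finset.univ.erase v₀, 3 ≤ G.degree v + m v := by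
      intro v hv
      have h0 := hstable v
      rw [hrest v (Finset.mem_erase.mp hv).1] at h0
      push_cast at h0 ⊢
      omega
    have hsum3 : 3 * (N - 1) ≤ ∑ v ∈ Finset.univ.erase v₀, (G.degree v + m v) := by
      have := Finset.card_nsmul_le_sum _ _ 3 hst
      simpa [Finset.card_erase_of_mem, hcard, mul_comm] using this
    have hsplit : ∑ v ∈ Finset.univ.erase v₀, (G.degree v + m v)
        = (∑ v ∈ Finset.univ.erase v₀, G.degree v) + ∑ v ∈ Finset.univ.erase v₀, m v :=
      Finset.sum_add_distrib
    have hdegerase : ∑ v ∈ Finset.univ.erase v₀, G.degree v + G.degree v₀ = 2 * (N - 1) := by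
      rw [← hdegsum, Finset.sum_erase_add _ _ (Finset.mem_univ v₀)]
    have hmerase : ∑ v ∈ Finset.univ.erase v₀, m v ≤ n := by
      rw [hn]
      exact Finset.sum_le_sum_of_subset (Finset.subset_univ _)
    omega
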